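/- Let p be a prime and V ⊆ F_p^{4p} the set of characteristic vectors of 2p-element subsets of [4p]. Let P ∈ F_p[x_1,...,x_{4p}] vanish on V, and let C ⊆ [4p] with |C| = 3p be such that P(v_C) ≠ 0, where v_C is the characteristic vector of C. Then deg(P) ≥ p. -/

import Mathlib

open MvPolynomial

lemma choose_p_add_cast (p m : ℕ) (hp : p.Prime) (hm : m < p) :
    (((p + m).choose m : ℕ) : ZMod p) = 1 := by
  rw [Nat.add_choose_eq, Nat.cast_sum]
  rw [Finset.sum_eq_single (0, m)]
  · simp
  · rintro ⟨i, j⟩ hij hne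
    rw [Finset.HasAntidiagonal.mem_antidiagonal] at hij
    have hi : i ≠ 0 := by
      rintro rfl
      exact hne (by simp at hij ⊢; omega)
    have hdvd : p ∣ p.choose i :=
      Nat.Prime.dvd_choose_self hp hi (by omega)
    obtain ⟨c, hc⟩ := hdvd
    simp [hc]
  · intro h
    exact absurd (by simp) h

lemma card_filter_superset {ι : Type*} [DecidableEq ι] (X F : Finset ι) (k : ℕ)
    (hFX : F ⊆ X) (hFk : F.card ≤ k) :
    ((X.powersetCard k).filter (fun E => F ⊆ E)).card
      = ((X \ F).powersetCard (k - F.card)).card := by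
  apply Finset.card_bij' (fun E _ => E \ F) (fun G _ => G ∪ F)
  · intro E hE
    rw [Finset.mem_filter, Finset.mem_powersetCard] at hE
    rw [Finset.mem_powersetCard]
    exact ⟨Finset.sdiff_subset_sdiff hE.1.1 (le_refl _),
      by rw [Finset.card_sdiff_of_subset hE.2, hE.1.2]⟩
  · intro G hG
    rw [Finset.mem_powersetCard] at hG
    have hGX : G ⊆ X := hG.1.trans (Finset.sdiff_subset)
    have hdisj : Disjoint G F := Finset.sdiff_disjoint.mono_left hG.1
    rw [Finset.mem_filter, Finset.mem_powersetCard]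
    refine ⟨⟨Finset.union_subset hGX hFX, ?_⟩, Finset.subset_union_right⟩
    rw [Finset.card_union_of_disjoint hdisj, hG.2]
    omega
  · intro E hE
    rw [Finset.mem_filter] at hE
    exact Finset.sdiff_union_of_subset hE.2
  · intro G hG
    rw [Finset.mem_powersetCard] at hG
    have hdisj : Disjoint G F := Finset.sdiff_disjoint.mono_left hG.1
    rw [Finset.union_sdiff_right]
    exact Finset.sdiff_eq_self_of_disjoint hdisj

lemma key_identity {ι : Type*} [DecidableEq ι] (p : ℕ) (hp : p.Prime)
    (C D : Finset ι) (hDC : D ⊆ C) (hDcard : D.card = p + 1) (hC : C.card = 3 * p)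
    (S : Finset ι) (hS : S.card ≤ p - 1) :
    (∑ E ∈ (C \ D).powersetCard (p - 1), if S ⊆ D ∪ E then (1 : ZMod p) else 0)
      = if S ⊆ C then 1 else 0 := by
  have hp2 : 2 ≤ p := hp.two_le
  by_cases hSC : S ⊆ C
  · rw [if_pos hSC]
    have hrw : (∑ E ∈ (C \ D).powersetCard (p - 1), if S ⊆ D ∪ E then (1 : ZMod p) else 0)
        = ∑ E ∈ (C \ D).powersetCard (p - 1), if S \ D ⊆ E then (1 : ZMod p) else 0 := by
      apply Finset.sum_congr rfl
      intro E _
      congr 1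
      apply propext
      constructor
      · intro h x hx
        rcases Finset.mem_sdiff.mp hx with ⟨hxS, hxD⟩
        rcases Finset.mem_union.mp (h hxS) with h' | h'
        · exact absurd h' hxD
        · exact h'
      · intro h x hx
        by_cases hxD : x ∈ D
        · exact Finset.mem_union_left _ hxD
        · exact Finset.mem_union_right _ (h (Finset.mem_sdiff.mpr ⟨hx, hxD⟩))
    rw [hrw, Finset.sum_boole]
    set F := S \ D with hF
    set X := C \ D with hX
    have hFX : F ⊆ X := Finset.sdiff_subset_sdiff hSC (le_refl _)
    have ht : F.card ≤ p - 1 := le_trans (Finset.card_le_card Finset.sdiff_subset) hS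
    rw [card_filter_superset X F (p - 1) hFX ht, Finset.card_powersetCard]
    have hXcard : X.card = 2 * p - 1 := by
      rw [hX, Finset.card_sdiff_of_subset hDC, hC, hDcard]
      omega
    have hXF : (X \ F).card = p + (p - 1 - F.card) := by
      rw [Finset.card_sdiff_of_subset hFX, hXcard]
      omega
    rw [hXF]
    have hmm : p - 1 - F.card < p := by omega
    exact_mod_cast choose_p_add_cast p (p - 1 - F.card) hp hmm
  · rw [if_neg hSC]
    apply Finset.sum_eq_zero
    intro E hE
    rw [Finset.mem_powersetCard] at hE
    have : ¬ S ⊆ D ∪ E := fun h => hSC (h.trans (Finset.union_subset hDC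
      (hE.1.trans Finset.sdiff_subset)))
    rw [if_neg this]

lemma eval_indicator {ι : Type*} {R : Type*} [CommRing R] [DecidableEq ι]
    (T : Finset ι) (P : MvPolynomial ι R) :
    eval (fun i => if i ∈ T then (1 : R) else 0) P
      = ∑ d ∈ P.support, P.coeff d * (if d.support ⊆ T then 1 else 0) := by
  rw [eval_eq]
  apply Finset.sum_congr rfl
  intro d _
  congr 1
  by_cases h : d.support ⊆ T
  · rw [if_pos h]
    apply Finset.prod_eq_one
    intro i hi
    rw [if_pos (h hi), one_pow]
  · rw [if_neg h]
    obtain ⟨i, hi, hiT⟩ := Finset.not_subset.mp h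
    apply Finset.prod_eq_zero hi
    rw [if_neg hiT]
    exact zero_pow (Finsupp.mem_support_iff.mp hi)

/-- If `P ∈ F_p[x_1,…,x_{4p}]` vanishes at the characteristic vectors of all `2p`-element
subsets of `[4p]` but not at the characteristic vector of some `3p`-element set `C`,
then `deg P ≥ p`. -/
theorem stmt17 (p : ℕ) (hp : p.Prime)
    (P : MvPolynomial (Fin (4 * p)) (ZMod p))
    (hvanish : ∀ B : Finset (Fin (4 * p)), B.card = 2 * p →
      eval (fun i => if i ∈ B then (1 : ZMod p) else 0) P = 0)
    (C : Finset (Fin (4 * p))) (hC : C.card = 3 * p)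
    (hPC : eval (fun i => if i ∈ C then (1 : ZMod p) else 0) P ≠ 0) :
    p ≤ P.totalDegree := by
  by_contra hlt
  push_neg at hlt
  have hp2 : 2 ≤ p := hp.two_le
  obtain ⟨D, hDC, hDcard⟩ := Finset.exists_subset_card_eq (s := C) (n := p + 1) (by rw [hC]; omega)
  -- each monomial support has card ≤ p - 1
  have hsupp : ∀ d ∈ P.support, (d.support.card ≤ p - 1) := by
    intro d hd
    have h1 : d.support.card ≤ d.sum fun _ e => e := by
      rw [Finsupp.sum]
      calc d.support.card = ∑ _i ∈ d.support, 1 := by simp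
        _ ≤ ∑ i ∈ d.support, d i :=
          Finset.sum_le_sum fun i hi =>
            Nat.one_le_iff_ne_zero.mpr (Finsupp.mem_support_iff.mp hi)
    have h2 := MvPolynomial.le_totalDegree hd
    omega
  -- the certificate identity
  have hsum : eval (fun i => if i ∈ C then (1 : ZMod p) else 0) P
      = ∑ E ∈ (C \ D).powersetCard (p - 1),
          eval (fun i => if i ∈ D ∪ E then (1 : ZMod p) else 0) P := by
    rw [eval_indicator]
    have hrhs : (∑ E ∈ (C \ D).powersetCard (p - 1),
          eval (fun i => if i ∈ D ∪ E then (1 : ZMod p) else 0) P)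
        = ∑ E ∈ (C \ D).powersetCard (p - 1), ∑ d ∈ P.support,
            P.coeff d * (if d.support ⊆ D ∪ E then 1 else 0) := by
      apply Finset.sum_congr rfl
      intro E _
      rw [eval_indicator]
    rw [hrhs, Finset.sum_comm]
    apply Finset.sum_congr rfl
    intro d hd
    rw [← Finset.mul_sum]
    congr 1
    exact (key_identity p hp C D hDC hDcard hC d.support (hsupp d hd)).symm
  have hzero : ∀ E ∈ (C \ D).powersetCard (p - 1),
      eval (fun i => if i ∈ D ∪ E then (1 : ZMod p) else 0) P = 0 := by
    intro E hE
    rw [Finset.mem_powersetCard] at hE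
    apply hvanish
    have hdisj : Disjoint D E := Finset.disjoint_sdiff.mono_right hE.1
    rw [Finset.card_union_of_disjoint hdisj, hDcard, hE.2]
    omega
  rw [hsum, Finset.sum_eq_zero hzero] at hPC
  exact hPC rfl
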